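/- Let T be a countable subset of the interior of Q in ℝ². Then there exists a topological embedding h : E₄ → ℝ² with range contained in Q such that h(1,0) = p₄, h(−1,0) = p₁, h(0,1) = p₂, h(0,−1) = p₃, the range of h is disjoint from T, and the range of h intersects the frontier of Q precisely in the set {p₁, p₂, p₃, p₄}. -/

import Mathlib

open Metric Set
noncomputable def pt2 (x y : ℝ) : EuclideanSpace ℝ (Fin 2) :=
  (WithLp.equiv 2 (Fin 2 → ℝ)).symm ![x, y]
noncomputable def Qregion : Set (EuclideanSpace ℝ (Fin 2)) :=
  Metric.closedBall (pt2 0 0) 1 \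
    (Metric.ball (pt2 (-(1/2)) 0) (1/4) ∪ Metric.ball (pt2 0 (1/2)) (1/4) ∪
      Metric.ball (pt2 0 (-(1/2))) (1/4))
noncomputable def p1 : EuclideanSpace ℝ (Fin 2) := pt2 (-(1/4)) 0
noncomputable def p2 : EuclideanSpace ℝ (Fin 2) := pt2 0 (1/4)
noncomputable def p3 : EuclideanSpace ℝ (Fin 2) := pt2 0 (-(1/4))
noncomputable def p4 : EuclideanSpace ℝ (Fin 2) := pt2 1 0
noncomputable def Gt (t : ℝ) : Set (EuclideanSpace ℝ (Fin 2)) :=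
  segment ℝ (pt2 t (-t)) p1 ∪ segment ℝ (pt2 t (-t)) p2 ∪
    segment ℝ (pt2 t (-t)) p3 ∪ segment ℝ (pt2 t (-t)) p4
noncomputable def E4 : Set (EuclideanSpace ℝ (Fin 2)) :=
  segment ℝ (pt2 0 0) (pt2 1 0) ∪ segment ℝ (pt2 0 0) (pt2 (-1) 0) ∪
    segment ℝ (pt2 0 0) (pt2 0 1) ∪ segment ℝ (pt2 0 0) (pt2 0 (-1))

lemma pt2_ext (z : EuclideanSpace ℝ (Fin 2)) : z = pt2 (z 0) (z 1) := by
  ext i; fin_cases i <;> rfl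
lemma pt2_add (a b c d : ℝ) : pt2 a b + pt2 c d = pt2 (a+c) (b+d) := by
  ext i; fin_cases i <;> rfl
lemma pt2_smul (r a b : ℝ) : r • pt2 a b = pt2 (r*a) (r*b) := by
  ext i; fin_cases i <;> rfl
lemma pt2_sub (a b c d : ℝ) : pt2 a b - pt2 c d = pt2 (a-c) (b-d) := by
  ext i; fin_cases i <;> rfl
lemma pt2_congr {a b c d : ℝ} (h1 : a = c) (h2 : b = d) : pt2 a b = pt2 c d := by
  rw [h1, h2]
lemma pt2_inj {a b c d : ℝ} (h : pt2 a b = pt2 c d) : a = c ∧ b = d :=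
  ⟨congrArg (fun z => z 0) h, congrArg (fun z => z 1) h⟩
lemma dist_pt2 (a b c d : ℝ) : dist (pt2 a b) (pt2 c d) = Real.sqrt ((a-c)^2 + (b-d)^2) := by
  rw [EuclideanSpace.dist_eq]
  simp [Fin.sum_univ_two, Real.dist_eq, sq_abs]
  rfl

lemma mem_ball_pt2 {a b c d r : ℝ} (hr : 0 < r) :
    pt2 a b ∈ ball (pt2 c d) r ↔ (a-c)^2 + (b-d)^2 < r^2 := by
  rw [mem_ball, dist_pt2, Real.sqrt_lt' hr]
lemma mem_closedBall_pt2 {a b c d r : ℝ} (hr : 0 ≤ r) :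
    pt2 a b ∈ closedBall (pt2 c d) r ↔ (a-c)^2 + (b-d)^2 ≤ r^2 := by
  rw [mem_closedBall, dist_pt2, Real.sqrt_le_left hr]

lemma mem_Qregion {a b : ℝ} :
    pt2 a b ∈ Qregion ↔ a^2 + b^2 ≤ 1 ∧ (1/4)^2 ≤ (a+1/2)^2 + b^2 ∧
      (1/4)^2 ≤ a^2 + (b-1/2)^2 ∧ (1/4)^2 ≤ a^2 + (b+1/2)^2 := by
  simp only [Qregion, mem_diff, mem_union, mem_closedBall_pt2 (by norm_num : (0:ℝ) ≤ 1),
    mem_ball_pt2 (by norm_num : (0:ℝ) < 1/4), not_or, not_lt]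
  constructor
  · rintro ⟨h1, ⟨h2, h3⟩, h4⟩
    exact ⟨by nlinarith, by nlinarith, by nlinarith, by nlinarith⟩
  · rintro ⟨h1, h2, h3, h4⟩
    exact ⟨by nlinarith, ⟨by nlinarith, by nlinarith⟩, by nlinarith⟩

lemma mem_segment_pt2 {u v u' v' : ℝ} {x : EuclideanSpace ℝ (Fin 2)} :
    x ∈ segment ℝ (pt2 u v) (pt2 u' v') ↔
      ∃ s, 0 ≤ s ∧ s ≤ 1 ∧ x = pt2 ((1-s)*u + s*u') ((1-s)*v + s*v') := by
  rw [segment_eq_image]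
  constructor
  · rintro ⟨s, ⟨hs0, hs1⟩, rfl⟩
    exact ⟨s, hs0, hs1, by simp only [pt2_smul, pt2_add]⟩
  · rintro ⟨s, hs0, hs1, rfl⟩
    exact ⟨s, ⟨hs0, hs1⟩, by simp only [pt2_smul, pt2_add]⟩

noncomputable def ctr (t : ℝ) : EuclideanSpace ℝ (Fin 2) := pt2 t (-t)

noncomputable def hmap (t : ℝ) (z : EuclideanSpace ℝ (Fin 2)) : EuclideanSpace ℝ (Fin 2) :=
  ctr t + (max (z 0) 0) • (p4 - ctr t) + (max (-(z 0)) 0) • (p1 - ctr t)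
    + (max (z 1) 0) • (p2 - ctr t) + (max (-(z 1)) 0) • (p3 - ctr t)

lemma hmap_coord (t a b : ℝ) :
    hmap t (pt2 a b) = pt2
      (t + max a 0 * (1-t) + max (-a) 0 * (-(1/4) - t) + max b 0 * (-t) + max (-b) 0 * (-t))
      (-t + max a 0 * t + max (-a) 0 * t + max b 0 * (1/4+t) + max (-b) 0 * (t-1/4)) := by
  show ctr t + (max (pt2 a b 0) 0) • (p4 - ctr t) + (max (-(pt2 a b 0)) 0) • (p1 - ctr t)
    + (max (pt2 a b 1) 0) • (p2 - ctr t) + (max (-(pt2 a b 1)) 0) • (p3 - ctr t) = _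
  have h0 : pt2 a b 0 = a := rfl
  have h1 : pt2 a b 1 = b := rfl
  rw [h0, h1]
  simp only [ctr, p1, p2, p3, p4, pt2_sub, pt2_smul, pt2_add]
  congr 1 <;> ring

lemma hmap_cont (t : ℝ) : Continuous (hmap t) := by
  unfold hmap
  fun_prop

lemma hmap_seg4 (t : ℝ) :
    hmap t '' segment ℝ (pt2 0 0) (pt2 1 0) = segment ℝ (ctr t) p4 := by
  rw [segment_eq_image, segment_eq_image, ← image_comp]
  refine image_congr fun s hs => ?_
  simp only [Function.comp_apply, pt2_smul, pt2_add]
  rw [hmap_coord]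
  have h1 : max ((1-s)*0 + s*1) 0 = s := by rw [max_eq_left]; ring_nf; linarith [hs.1]
  have h2 : max (-((1-s)*0 + s*1)) 0 = 0 := by rw [max_eq_right]; ring_nf; linarith [hs.1]
  have h3 : max ((1-s)*0 + s*0) 0 = 0 := by norm_num
  have h4 : max (-((1-s)*0 + s*0)) 0 = 0 := by norm_num
  rw [h1, h2, h3, h4]
  simp only [ctr, p4, pt2_smul, pt2_add]
  congr 1 <;> ring

lemma hmap_seg1 (t : ℝ) :
    hmap t '' segment ℝ (pt2 0 0) (pt2 (-1) 0) = segment ℝ (ctr t) p1 := by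
  rw [segment_eq_image, segment_eq_image, ← image_comp]
  refine image_congr fun s hs => ?_
  simp only [Function.comp_apply, pt2_smul, pt2_add]
  rw [hmap_coord]
  have h1 : max ((1-s)*0 + s*(-1)) 0 = 0 := by rw [max_eq_right]; ring_nf; linarith [hs.1]
  have h2 : max (-((1-s)*0 + s*(-1))) 0 = s := by rw [max_eq_left]; ring_nf; linarith [hs.1]
  have h3 : max ((1-s)*0 + s*0) 0 = 0 := by norm_num
  have h4 : max (-((1-s)*0 + s*0)) 0 = 0 := by norm_num
  rw [h1, h2, h3, h4]
  simp only [ctr, p1, pt2_smul, pt2_add]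
  congr 1 <;> ring

lemma hmap_seg2 (t : ℝ) :
    hmap t '' segment ℝ (pt2 0 0) (pt2 0 1) = segment ℝ (ctr t) p2 := by
  rw [segment_eq_image, segment_eq_image, ← image_comp]
  refine image_congr fun s hs => ?_
  simp only [Function.comp_apply, pt2_smul, pt2_add]
  rw [hmap_coord]
  have h1 : max ((1-s)*0 + s*0) 0 = 0 := by norm_num
  have h2 : max (-((1-s)*0 + s*0)) 0 = 0 := by norm_num
  have h3 : max ((1-s)*0 + s*1) 0 = s := by rw [max_eq_left]; ring_nf; linarith [hs.1]
  have h4 : max (-((1-s)*0 + s*1)) 0 = 0 := by rw [max_eq_right]; ring_nf; linarith [hs.1]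
  rw [h1, h2, h3, h4]
  simp only [ctr, p2, pt2_smul, pt2_add]
  congr 1 <;> ring

lemma hmap_seg3 (t : ℝ) :
    hmap t '' segment ℝ (pt2 0 0) (pt2 0 (-1)) = segment ℝ (ctr t) p3 := by
  rw [segment_eq_image, segment_eq_image, ← image_comp]
  refine image_congr fun s hs => ?_
  simp only [Function.comp_apply, pt2_smul, pt2_add]
  rw [hmap_coord]
  have h1 : max ((1-s)*0 + s*0) 0 = 0 := by norm_num
  have h2 : max (-((1-s)*0 + s*0)) 0 = 0 := by norm_num
  have h3 : max ((1-s)*0 + s*(-1)) 0 = 0 := by rw [max_eq_right]; ring_nf; linarith [hs.1]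
  have h4 : max (-((1-s)*0 + s*(-1))) 0 = s := by rw [max_eq_left]; ring_nf; linarith [hs.1]
  rw [h1, h2, h3, h4]
  simp only [ctr, p3, pt2_smul, pt2_add]
  congr 1 <;> ring

lemma hmap_image (t : ℝ) : hmap t '' E4 = Gt t := by
  simp only [E4, Gt, image_union, hmap_seg1, hmap_seg2, hmap_seg3, hmap_seg4, ctr]
  ext x; simp only [mem_union]; tauto

lemma mem_E4 {z : EuclideanSpace ℝ (Fin 2)} (hz : z ∈ E4) :
    ∃ a, -1 ≤ a ∧ a ≤ 1 ∧ (z = pt2 a 0 ∨ z = pt2 0 a) := by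
  rcases hz with ((h | h) | h) | h <;>
    obtain ⟨s, hs0, hs1, rfl⟩ := mem_segment_pt2.mp h
  · exact ⟨s, by linarith, hs1, Or.inl (by congr 1 <;> ring)⟩
  · exact ⟨-s, by linarith, by linarith, Or.inl (by congr 1 <;> ring)⟩
  · exact ⟨s, by linarith, hs1, Or.inr (by congr 1 <;> ring)⟩
  · exact ⟨-s, by linarith, by linarith, Or.inr (by congr 1 <;> ring)⟩

lemma max_split (x : ℝ) :
    (0 ≤ x ∧ max x 0 = x ∧ max (-x) 0 = 0) ∨ (x ≤ 0 ∧ max x 0 = 0 ∧ max (-x) 0 = -x) := by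
  rcases le_total 0 x with h | h
  · exact Or.inl ⟨h, max_eq_left h, max_eq_right (by linarith)⟩
  · exact Or.inr ⟨h, max_eq_right h, max_eq_left (by linarith)⟩

set_option maxHeartbeats 1600000 in
lemma hmap_injOn {t : ℝ} (ht0 : 0 < t) (ht : t < 1/4) : Set.InjOn (hmap t) E4 := by
  intro z hz w hw heq
  obtain ⟨a, ha1, ha2, hz'⟩ := mem_E4 hz
  obtain ⟨b, hb1, hb2, hw'⟩ := mem_E4 hw
  rcases hz' with rfl | rfl <;> rcases hw' with rfl | rfl <;>
    rw [hmap_coord, hmap_coord] at heq <;>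
    simp only [neg_zero, max_self, zero_mul, add_zero, zero_add, mul_zero] at heq <;>
    rcases max_split a with ⟨ha, ha3, ha4⟩ | ⟨ha, ha3, ha4⟩ <;>
    rcases max_split b with ⟨hb, hb3, hb4⟩ | ⟨hb, hb3, hb4⟩ <;>
    rw [ha3, ha4, hb3, hb4] at heq <;>
    obtain ⟨e1, e2⟩ := pt2_inj heq <;>
    (have hab : a = b := by nlinarith [e1, e2, mul_pos ht0 ht0]) <;>
    first
      | (rw [hab]; done)
      | (have ha0 : a = 0 := by nlinarith [e1, e2]
         rw [ha0] at hab ⊢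
         rw [← hab])

lemma sq_box_le {X Y : ℝ} (h1 : -(1/4) ≤ X) (h2 : X ≤ 1/4) (h3 : -(1/4) ≤ Y)
    (h4 : Y ≤ 1/4) : X^2 + Y^2 ≤ 1 := by nlinarith
lemma sq_box_lt {X Y : ℝ} (h1 : -(1/4) ≤ X) (h2 : X ≤ 1/4) (h3 : -(1/4) ≤ Y)
    (h4 : Y ≤ 1/4) : X^2 + Y^2 < 1 := by nlinarith
lemma q1_le {A B : ℝ} (h : 1/4 ≤ A) : (1/4:ℝ)^2 ≤ A^2 + B^2 := by nlinarith [sq_nonneg B]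
lemma q1_le' {A B : ℝ} (h : A ≤ -(1/4)) : (1/4:ℝ)^2 ≤ A^2 + B^2 := by nlinarith [sq_nonneg B]
lemma q2_le {A B : ℝ} (h : 1/4 ≤ B) : (1/4:ℝ)^2 ≤ A^2 + B^2 := by nlinarith [sq_nonneg A]
lemma q2_le' {A B : ℝ} (h : B ≤ -(1/4)) : (1/4:ℝ)^2 ≤ A^2 + B^2 := by nlinarith [sq_nonneg A]
lemma q1_lt {A B : ℝ} (h : 1/4 < A) : (1/4:ℝ)^2 < A^2 + B^2 := by nlinarith [sq_nonneg B]
lemma q1_lt' {A B : ℝ} (h : A < -(1/4)) : (1/4:ℝ)^2 < A^2 + B^2 := by nlinarith [sq_nonneg B]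
lemma q2_lt {A B : ℝ} (h : 1/4 < B) : (1/4:ℝ)^2 < A^2 + B^2 := by nlinarith [sq_nonneg A]
lemma q2_lt' {A B : ℝ} (h : B < -(1/4)) : (1/4:ℝ)^2 < A^2 + B^2 := by nlinarith [sq_nonneg A]

lemma Gt_subset_Q {t : ℝ} (ht0 : 0 < t) (ht : t < 1/4) : Gt t ⊆ Qregion := by
  have h14 : (0:ℝ) < 1/4 := by norm_num
  rintro x (((h | h) | h) | h) <;>
    simp only [p1, p2, p3, p4] at h <;>
    obtain ⟨s, hs0, hs1, rfl⟩ := mem_segment_pt2.mp h <;>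
    rw [mem_Qregion] <;>
    [skip; skip; skip; skip]
  -- segment to p1 : X = (1-s)t - s/4, Y = -(1-s)t
  · have hst : 0 ≤ (1-s)*t := mul_nonneg (by linarith) ht0.le
    have hst2 : (1-s)*t ≤ t := by nlinarith [mul_nonneg hs0 ht0.le]
    refine ⟨sq_box_le (by linarith) (by linarith) (by linarith) (by linarith),
      q1_le (by linarith), q2_le' (by linarith), q2_le (by linarith)⟩
  -- segment to p2 : X = (1-s)t, Y = -(1-s)t + s/4
  · have hst : 0 ≤ (1-s)*t := mul_nonneg (by linarith) ht0.le
    have hst2 : (1-s)*t ≤ t := by nlinarith [mul_nonneg hs0 ht0.le]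
    refine ⟨sq_box_le (by linarith) (by linarith) (by linarith) (by linarith),
      q1_le (by linarith), q2_le' (by linarith), q2_le (by linarith)⟩
  -- segment to p3 : X = (1-s)t, Y = -(1-s)t - s/4
  · have hst : 0 ≤ (1-s)*t := mul_nonneg (by linarith) ht0.le
    have hst2 : (1-s)*t ≤ t := by nlinarith [mul_nonneg hs0 ht0.le]
    have hst3 : (1-s)*t ≤ (1-s)*(1/4) := by
      nlinarith [mul_nonneg (by linarith : (0:ℝ) ≤ 1-s) (by linarith : (0:ℝ) ≤ 1/4 - t)]
    refine ⟨sq_box_le (by linarith) (by linarith) (by linarith) (by linarith),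
      q1_le (by linarith), q2_le' (by linarith), q2_le (by linarith)⟩
  -- segment to p4 : X = (1-s)t + s, Y = -(1-s)t
  · have hst : 0 ≤ (1-s)*t := mul_nonneg (by linarith) ht0.le
    have hst2 : (1-s)*t ≤ t := by nlinarith [mul_nonneg hs0 ht0.le]
    have key : (0:ℝ) ≤ (1-s) * ((1-t)*(1+s) + (1-s)*t*(1-2*t)) := by
      refine mul_nonneg (by linarith) ?_
      nlinarith [mul_nonneg (mul_nonneg (by linarith : (0:ℝ) ≤ 1-s) ht0.le)
        (by linarith : (0:ℝ) ≤ 1 - 2*t)]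
    refine ⟨by nlinarith [key], q1_le (by linarith), q2_le' (by linarith), q2_le (by linarith)⟩

noncomputable def Ubig : Set (EuclideanSpace ℝ (Fin 2)) :=
  ball (pt2 0 0) 1 \ (closedBall (pt2 (-(1/2)) 0) (1/4) ∪ closedBall (pt2 0 (1/2)) (1/4) ∪
    closedBall (pt2 0 (-(1/2))) (1/4))

lemma mem_Ubig {a b : ℝ} :
    pt2 a b ∈ Ubig ↔ a^2 + b^2 < 1 ∧ (1/4)^2 < (a+1/2)^2 + b^2 ∧
      (1/4)^2 < a^2 + (b-1/2)^2 ∧ (1/4)^2 < a^2 + (b+1/2)^2 := by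
  simp only [Ubig, mem_diff, mem_union, mem_closedBall_pt2 (by norm_num : (0:ℝ) ≤ 1/4),
    mem_ball_pt2 (by norm_num : (0:ℝ) < 1), not_or, not_le]
  constructor
  · rintro ⟨h1, ⟨h2, h3⟩, h4⟩
    exact ⟨by nlinarith, by nlinarith, by nlinarith, by nlinarith⟩
  · rintro ⟨h1, h2, h3, h4⟩
    exact ⟨by nlinarith, ⟨by nlinarith, by nlinarith⟩, by nlinarith⟩

lemma Ubig_subset_interior : Ubig ⊆ interior Qregion := by
  apply interior_maximal
  · exact diff_subset_diff ball_subset_closedBall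
      (union_subset_union (union_subset_union ball_subset_closedBall ball_subset_closedBall)
        ball_subset_closedBall)
  · exact isOpen_ball.sdiff ((Metric.isClosed_closedBall.union Metric.isClosed_closedBall).union
      Metric.isClosed_closedBall)

lemma Gt_diff_subset_Ubig {t : ℝ} (ht0 : 0 < t) (ht : t < 1/4) :
    Gt t \ {p1, p2, p3, p4} ⊆ Ubig := by
  rintro x ⟨hx, hnp⟩
  simp only [mem_insert_iff, mem_singleton_iff, not_or] at hnp
  obtain ⟨hn1, hn2, hn3, hn4⟩ := hnp
  rcases hx with ((h | h) | h) | h <;>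
    simp only [p1, p2, p3, p4] at h <;>
    obtain ⟨s, hs0, hs1, rfl⟩ := mem_segment_pt2.mp h <;>
    rw [mem_Ubig] <;>
    [skip; skip; skip; skip]
  · have hs1' : s < 1 := by
      rcases lt_or_eq_of_le hs1 with h' | h'
      · exact h'
      · subst h'
        exact absurd (by rw [p1]; exact pt2_congr (by ring) (by ring)) hn1
    have hst : 0 ≤ (1-s)*t := mul_nonneg (by linarith) ht0.le
    have hstp : 0 < (1-s)*t := mul_pos (by linarith) ht0
    have hst2 : (1-s)*t ≤ t := by nlinarith [mul_nonneg hs0 ht0.le]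
    refine ⟨sq_box_lt (by linarith) (by linarith) (by linarith) (by linarith),
      q1_lt (by linarith), q2_lt' (by linarith), q2_lt (by linarith)⟩
  · have hs1' : s < 1 := by
      rcases lt_or_eq_of_le hs1 with h' | h'
      · exact h'
      · subst h'
        exact absurd (by rw [p2]; exact pt2_congr (by ring) (by ring)) hn2
    have hst : 0 ≤ (1-s)*t := mul_nonneg (by linarith) ht0.le
    have hst2 : (1-s)*t ≤ t := by nlinarith [mul_nonneg hs0 ht0.le]
    refine ⟨sq_box_lt (by linarith) (by linarith) (by linarith) (by linarith),
      q1_lt (by linarith), q2_lt' (by linarith), q2_lt (by linarith)⟩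
  · have hs1' : s < 1 := by
      rcases lt_or_eq_of_le hs1 with h' | h'
      · exact h'
      · subst h'
        exact absurd (by rw [p3]; exact pt2_congr (by ring) (by ring)) hn3
    have hst : 0 ≤ (1-s)*t := mul_nonneg (by linarith) ht0.le
    have hst2 : (1-s)*t ≤ t := by nlinarith [mul_nonneg hs0 ht0.le]
    have hst3 : (1-s)*t < (1-s)*(1/4) := by
      nlinarith [mul_pos (by linarith : (0:ℝ) < 1-s) (by linarith : (0:ℝ) < 1/4 - t)]
    refine ⟨sq_box_lt (by linarith) (by linarith) (by linarith) (by linarith),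
      q1_lt (by linarith), q2_lt' (by linarith), q2_lt (by linarith)⟩
  · have hs1' : s < 1 := by
      rcases lt_or_eq_of_le hs1 with h' | h'
      · exact h'
      · subst h'
        exact absurd (by rw [p4]; exact pt2_congr (by ring) (by ring)) hn4
    have hst : 0 ≤ (1-s)*t := mul_nonneg (by linarith) ht0.le
    have hst2 : (1-s)*t ≤ t := by nlinarith [mul_nonneg hs0 ht0.le]
    have key : (0:ℝ) < (1-s) * ((1-t)*(1+s) + (1-s)*t*(1-2*t)) := by
      refine mul_pos (by linarith) ?_
      nlinarith [mul_nonneg (mul_nonneg (by linarith : (0:ℝ) ≤ 1-s) ht0.le)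
        (by linarith : (0:ℝ) ≤ 1 - 2*t)]
    refine ⟨by nlinarith [key], q1_lt (by linarith), q2_lt' (by linarith), q2_lt (by linarith)⟩

@[simp] lemma pt2_app0 (a b : ℝ) : pt2 a b 0 = a := rfl
@[simp] lemma pt2_app1 (a b : ℝ) : pt2 a b 1 = b := rfl

lemma p1_mem_Q : p1 ∈ Qregion := by rw [p1, mem_Qregion]; norm_num
lemma p2_mem_Q : p2 ∈ Qregion := by rw [p2, mem_Qregion]; norm_num
lemma p3_mem_Q : p3 ∈ Qregion := by rw [p3, mem_Qregion]; norm_num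
lemma p4_mem_Q : p4 ∈ Qregion := by rw [p4, mem_Qregion]; norm_num

lemma ball1_compl : ball (pt2 (-(1/2)) 0) (1/4) ⊆ Qregionᶜ :=
  fun _ hx hxQ => hxQ.2 (Or.inl (Or.inl hx))
lemma ball2_compl : ball (pt2 0 (1/2)) (1/4) ⊆ Qregionᶜ :=
  fun _ hx hxQ => hxQ.2 (Or.inl (Or.inr hx))
lemma ball3_compl : ball (pt2 0 (-(1/2))) (1/4) ⊆ Qregionᶜ :=
  fun _ hx hxQ => hxQ.2 (Or.inr hx)

lemma p1_frontier : p1 ∈ frontier Qregion := by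
  rw [frontier_eq_closure_inter_closure]
  refine ⟨subset_closure p1_mem_Q, closure_mono ball1_compl ?_⟩
  rw [closure_ball _ (by norm_num : (1/4:ℝ) ≠ 0), p1,
    mem_closedBall_pt2 (by norm_num : (0:ℝ) ≤ 1/4)]
  norm_num

lemma p2_frontier : p2 ∈ frontier Qregion := by
  rw [frontier_eq_closure_inter_closure]
  refine ⟨subset_closure p2_mem_Q, closure_mono ball2_compl ?_⟩
  rw [closure_ball _ (by norm_num : (1/4:ℝ) ≠ 0), p2,
    mem_closedBall_pt2 (by norm_num : (0:ℝ) ≤ 1/4)]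
  norm_num

lemma p3_frontier : p3 ∈ frontier Qregion := by
  rw [frontier_eq_closure_inter_closure]
  refine ⟨subset_closure p3_mem_Q, closure_mono ball3_compl ?_⟩
  rw [closure_ball _ (by norm_num : (1/4:ℝ) ≠ 0), p3,
    mem_closedBall_pt2 (by norm_num : (0:ℝ) ≤ 1/4)]
  norm_num

lemma p4_frontier : p4 ∈ frontier Qregion := by
  rw [frontier_eq_closure_inter_closure]
  refine ⟨subset_closure p4_mem_Q, ?_⟩
  have hsub : (closedBall (pt2 0 0) 1)ᶜ ⊆ Qregionᶜ :=
    compl_subset_compl.mpr fun x hx => hx.1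
  refine closure_mono hsub ?_
  have hfr : p4 ∈ frontier (closedBall (pt2 0 0) 1) := by
    rw [frontier_closedBall _ (one_ne_zero), p4, mem_sphere, dist_pt2]
    norm_num
  rw [← frontier_compl] at hfr
  exact frontier_subset_closure hfr

lemma frontier_disj {x : EuclideanSpace ℝ (Fin 2)} (hx : x ∈ interior Qregion) :
    x ∉ frontier Qregion := by
  rw [frontier_eq_closure_inter_closure, closure_compl]
  rintro ⟨-, hx2⟩
  exact hx2 hx

lemma segment_compact (x y : EuclideanSpace ℝ (Fin 2)) : IsCompact (segment ℝ x y) := by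
  rw [segment_eq_image]
  exact isCompact_Icc.image (by fun_prop)

lemma E4_compact : IsCompact E4 :=
  (((segment_compact _ _).union (segment_compact _ _)).union (segment_compact _ _)).union
    (segment_compact _ _)

noncomputable def Fx (x : EuclideanSpace ℝ (Fin 2)) : Set ℝ :=
  {-(x 1)/(1 + 4*(x 0 + x 1)), (x 0)/(1 - 4*(x 0 + x 1)), (x 0)/(1 + 4*(x 0 + x 1)),
    -(x 1)/(1 - (x 0 + x 1))}

lemma Fx_countable (x : EuclideanSpace ℝ (Fin 2)) : (Fx x).Countable :=
  (((Set.countable_singleton _).insert _).insert _).insert _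

lemma mem_Fx {t : ℝ} {x : EuclideanSpace ℝ (Fin 2)} (hx : x ∈ Gt t)
    (hnot : x ∉ ({p1, p2, p3, p4} : Set (EuclideanSpace ℝ (Fin 2)))) : t ∈ Fx x := by
  simp only [mem_insert_iff, mem_singleton_iff, not_or] at hnot
  obtain ⟨hn1, hn2, hn3, hn4⟩ := hnot
  rcases hx with ((h | h) | h) | h <;>
    simp only [p1, p2, p3, p4] at h <;>
    obtain ⟨s, hs0, hs1, rfl⟩ := mem_segment_pt2.mp h <;>
    simp only [Fx, mem_insert_iff, mem_singleton_iff, pt2_app0, pt2_app1] <;>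
    [skip; skip; skip; skip]
  · have hs1' : s < 1 := by
      rcases lt_or_eq_of_le hs1 with h' | h'
      · exact h'
      · subst h'
        exact absurd (by rw [p1]; exact pt2_congr (by ring) (by ring)) hn1
    refine Or.inl ?_
    have hd : (1:ℝ) + 4*(((1-s)*t + s*(-(1/4))) + ((1-s)*(-t) + s*0)) = 1 - s := by ring
    rw [hd, eq_comm, div_eq_iff (by intro hh; rw [sub_eq_zero] at hh; exact hs1'.ne hh.symm)]
    ring
  · have hs1' : s < 1 := by
      rcases lt_or_eq_of_le hs1 with h' | h'
      · exact h'
      · subst h'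
        exact absurd (by rw [p2]; exact pt2_congr (by ring) (by ring)) hn2
    refine Or.inr (Or.inl ?_)
    have hd : (1:ℝ) - 4*(((1-s)*t + s*0) + ((1-s)*(-t) + s*(1/4))) = 1 - s := by ring
    rw [hd, eq_comm, div_eq_iff (by intro hh; rw [sub_eq_zero] at hh; exact hs1'.ne hh.symm)]
    ring
  · have hs1' : s < 1 := by
      rcases lt_or_eq_of_le hs1 with h' | h'
      · exact h'
      · subst h'
        exact absurd (by rw [p3]; exact pt2_congr (by ring) (by ring)) hn3
    refine Or.inr (Or.inr (Or.inl ?_))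
    have hd : (1:ℝ) + 4*(((1-s)*t + s*0) + ((1-s)*(-t) + s*(-(1/4)))) = 1 - s := by ring
    rw [hd, eq_comm, div_eq_iff (by intro hh; rw [sub_eq_zero] at hh; exact hs1'.ne hh.symm)]
    ring
  · have hs1' : s < 1 := by
      rcases lt_or_eq_of_le hs1 with h' | h'
      · exact h'
      · subst h'
        exact absurd (by rw [p4]; exact pt2_congr (by ring) (by ring)) hn4
    refine Or.inr (Or.inr (Or.inr ?_))
    have hd : (1:ℝ) - (((1-s)*t + s*1) + ((1-s)*(-t) + s*0)) = 1 - s := by ring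
    rw [hd, eq_comm, div_eq_iff (by intro hh; rw [sub_eq_zero] at hh; exact hs1'.ne hh.symm)]
    ring

lemma exists_good_t {bad : Set ℝ} (hbad : bad.Countable) :
    ∃ t, t ∈ Ioo (0:ℝ) (1/4) ∧ t ∉ bad := by
  by_contra hcon
  push_neg at hcon
  have hsub : Ioo (0:ℝ) (1/4) ⊆ bad := fun t ht => hcon t ht
  have hle := MeasureTheory.measure_mono (μ := MeasureTheory.volume) hsub
  rw [hbad.measure_zero MeasureTheory.volume, Real.volume_Ioo] at hle
  simp only [nonpos_iff_eq_zero, ENNReal.ofReal_eq_zero] at hle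
  norm_num at hle

lemma hmap_e1 (t : ℝ) : hmap t (pt2 1 0) = p4 := by
  rw [hmap_coord, p4]
  exact pt2_congr (by norm_num <;> ring) (by norm_num <;> ring)
lemma hmap_e2 (t : ℝ) : hmap t (pt2 (-1) 0) = p1 := by
  rw [hmap_coord, p1]
  exact pt2_congr (by norm_num <;> ring) (by norm_num <;> ring)
lemma hmap_e3 (t : ℝ) : hmap t (pt2 0 1) = p2 := by
  rw [hmap_coord, p2]
  exact pt2_congr (by norm_num <;> ring) (by norm_num <;> ring)
lemma hmap_e4 (t : ℝ) : hmap t (pt2 0 (-1)) = p3 := by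
  rw [hmap_coord, p3]
  exact pt2_congr (by norm_num <;> ring) (by norm_num <;> ring)

theorem stmt7 (T : Set (EuclideanSpace ℝ (Fin 2)))
    (hT : T.Countable) (hTQ : T ⊆ interior Qregion) :
    ∃ h : EuclideanSpace ℝ (Fin 2) → EuclideanSpace ℝ (Fin 2),
      Topology.IsEmbedding (E4.restrict h) ∧
      h '' E4 ⊆ Qregion ∧
      h (pt2 1 0) = p4 ∧ h (pt2 (-1) 0) = p1 ∧
      h (pt2 0 1) = p2 ∧ h (pt2 0 (-1)) = p3 ∧
      h '' E4 ∩ T = ∅ ∧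
      h '' E4 ∩ frontier Qregion = {p1, p2, p3, p4} := by
  classical
  have hbadc : (⋃ x ∈ T, Fx x).Countable := hT.biUnion (fun x _ => Fx_countable x)
  obtain ⟨t, ⟨ht0, ht⟩, htbad⟩ := exists_good_t hbadc
  refine ⟨hmap t, ?_, ?_, hmap_e1 t, hmap_e2 t, hmap_e3 t, hmap_e4 t, ?_, ?_⟩
  · have : CompactSpace E4 := isCompact_iff_compactSpace.mp E4_compact
    exact (((hmap_cont t).comp continuous_subtype_val).isClosedEmbedding
      (Set.injOn_iff_injective.mp (hmap_injOn ht0 ht))).isEmbedding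
  · rw [hmap_image]
    exact Gt_subset_Q ht0 ht
  · rw [hmap_image]
    ext x
    simp only [mem_inter_iff, mem_empty_iff_false, iff_false, not_and]
    intro hxG hxT
    have hxi := hTQ hxT
    have hnp : x ∉ ({p1, p2, p3, p4} : Set (EuclideanSpace ℝ (Fin 2))) := by
      intro hp
      rcases (by simpa using hp : x = p1 ∨ x = p2 ∨ x = p3 ∨ x = p4) with rfl | rfl | rfl | rfl
      · exact frontier_disj hxi p1_frontier
      · exact frontier_disj hxi p2_frontier
      · exact frontier_disj hxi p3_frontier
      · exact frontier_disj hxi p4_frontier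
    exact htbad (mem_biUnion hxT (mem_Fx hxG hnp))
  · rw [hmap_image]
    apply Subset.antisymm
    · rintro x ⟨hxG, hxF⟩
      by_contra hnp
      exact frontier_disj (Ubig_subset_interior (Gt_diff_subset_Ubig ht0 ht ⟨hxG, hnp⟩)) hxF
    · intro x hx
      rcases (by simpa using hx : x = p1 ∨ x = p2 ∨ x = p3 ∨ x = p4) with rfl | rfl | rfl | rfl
      · exact ⟨Or.inl (Or.inl (Or.inl (right_mem_segment ℝ _ _))), p1_frontier⟩
      · exact ⟨Or.inl (Or.inl (Or.inr (right_mem_segment ℝ _ _))), p2_frontier⟩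
      · exact ⟨Or.inl (Or.inr (right_mem_segment ℝ _ _)), p3_frontier⟩
      · exact ⟨Or.inr (right_mem_segment ℝ _ _), p4_frontier⟩
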